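/- Let τ = (1,1̄)⋯(n,n̄) ∈ S_{2n} and let x_k and x_{k+1} = x_k·(i j) be elements of S_{2n}, where (i j) is a transposition with j ∉ {i, τ(i)}. Define δ_k = (τx_{k+1})τ(τx_{k+1})⁻¹ and δ_{k-1} = (τx_k)τ(τx_k)⁻¹. Then δ_{k-1}δ_k is a product of two disjoint transpositions (cd)(ab), where a = τx_k(i), b = τx_k(j), c = τx_kτ(i), d = τx_kτ(j), and a, b, c, d are pairwise distinct; in particular δ_{k-1}δ_k has cycle type [2,2,1^{2n-4}]. -/

import Mathlib

/-- with `τ` the fixed-point-free involution `k ↔ k̄` of the `2n`-element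
set, `x_{k+1} = x_k (i j)` with `j ∉ {i, τ i}`, and
`δ_k = (τ x_{k+1}) τ (τ x_{k+1})⁻¹`, `δ_{k-1} = (τ x_k) τ (τ x_k)⁻¹`, one has
`δ_{k-1} δ_k = (c d)(a b)` where `a = τ x_k i`, `b = τ x_k j`, `c = τ x_k τ i`,
`d = τ x_k τ j` are pairwise distinct; in particular the cycle type of `δ_{k-1} δ_k`
is `[2, 2, 1^{2n-4}]`, i.e. its nontrivial cycle type is `{2, 2}`. -/
theorem stmt_4 {α : Type*} [Fintype α] [DecidableEq α] (n : ℕ)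
    (hcard : Fintype.card α = 2 * n)
    (τ xk : Equiv.Perm α)
    (hτinv : τ * τ = 1) (hτfree : ∀ x : α, τ x ≠ x)
    (i j : α) (hji : j ≠ i) (hjτ : j ≠ τ i)
    (xk1 δk δkm1 : Equiv.Perm α)
    (hx : xk1 = xk * Equiv.swap i j)
    (hδk : δk = (τ * xk1) * τ * (τ * xk1)⁻¹)
    (hδkm1 : δkm1 = (τ * xk) * τ * (τ * xk)⁻¹)
    (a b c d : α)
    (ha : a = (τ * xk) i) (hb : b = (τ * xk) j)
    (hc : c = (τ * xk * τ) i) (hd : d = (τ * xk * τ) j) :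
    δkm1 * δk = Equiv.swap c d * Equiv.swap a b ∧
    ([a, b, c, d] : List α).Pairwise (· ≠ ·) ∧
    (δkm1 * δk).cycleType = {2, 2} := by
  set y := τ * xk with hy
  have hτ' : τ⁻¹ = τ := by
    rw [inv_eq_iff_mul_eq_one]; exact hτinv
  -- the main product identity
  have key : δkm1 * δk = Equiv.swap c d * Equiv.swap a b := by
    have h1 : Equiv.swap c d = (y * τ) * Equiv.swap i j * (y * τ)⁻¹ := by
      rw [← Equiv.swap_apply_apply (y * τ)]
      rw [hc, hd]
    have h2 : Equiv.swap a b = y * Equiv.swap i j * y⁻¹ := by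
      rw [← Equiv.swap_apply_apply y, ha, hb]
    have hyx : τ * xk1 = y * Equiv.swap i j := by rw [hx, ← mul_assoc]
    rw [hδkm1, hδk, hyx, h1, h2]
    simp only [mul_inv_rev, Equiv.swap_inv, hτ']
    group
  refine ⟨key, ?_, ?_⟩
  · -- pairwise distinctness
    have hab : a ≠ b := by
      rw [ha, hb]; exact fun h => hji (y.injective h.symm)
    have hcd : c ≠ d := by
      rw [hc, hd]
      intro h
      exact hji (τ.injective (y.injective h)).symm
    have hac : a ≠ c := by
      rw [ha, hc]
      simp only [Equiv.Perm.mul_apply]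
      exact fun h => (hτfree i) (y.injective h).symm
    have had : a ≠ d := by
      rw [ha, hd]
      simp only [Equiv.Perm.mul_apply]
      intro h
      have := y.injective h
      have : τ i = τ (τ j) := congrArg τ this
      rw [← Equiv.Perm.mul_apply, hτinv] at this
      exact hjτ this.symm
    have hbc : b ≠ c := by
      rw [hb, hc]
      simp only [Equiv.Perm.mul_apply]
      exact fun h => hjτ (y.injective h)
    have hbd : b ≠ d := by
      rw [hb, hd]
      simp only [Equiv.Perm.mul_apply]
      exact fun h => (hτfree j) (y.injective h).symm
    simp [hab, hcd]
    exact ⟨⟨hac, had⟩, hbc, hbd⟩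
  · -- cycle type
    have hab : a ≠ b := by
      rw [ha, hb]; exact fun h => hji (y.injective h.symm)
    have hcd : c ≠ d := by
      rw [hc, hd]; exact fun h => hji (τ.injective (y.injective h)).symm
    have hac : a ≠ c := by
      rw [ha, hc]
      simp only [Equiv.Perm.mul_apply]
      exact fun h => (hτfree i) (y.injective h).symm
    have had : a ≠ d := by
      rw [ha, hd]
      simp only [Equiv.Perm.mul_apply]
      intro h
      have := congrArg τ (y.injective h)
      rw [← Equiv.Perm.mul_apply, hτinv] at this
      exact hjτ this.symm
    have hbc : b ≠ c := by
      rw [hb, hc]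
      simp only [Equiv.Perm.mul_apply]
      exact fun h => hjτ (y.injective h)
    have hbd : b ≠ d := by
      rw [hb, hd]
      simp only [Equiv.Perm.mul_apply]
      exact fun h => (hτfree j) (y.injective h).symm
    have hdisj : (Equiv.swap c d).Disjoint (Equiv.swap a b) := by
      rw [Equiv.Perm.disjoint_iff_disjoint_support,
        Equiv.Perm.support_swap hcd, Equiv.Perm.support_swap hab]
      simp only [Finset.disjoint_insert_left, Finset.disjoint_insert_right,
        Finset.mem_insert, Finset.mem_singleton, Finset.disjoint_singleton_left,
        Finset.disjoint_singleton_right, not_or]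
      exact ⟨⟨hac, had⟩, hbc, hbd⟩
    rw [key, Equiv.Perm.Disjoint.cycleType_mul hdisj,
      (Equiv.Perm.isCycle_swap hcd).cycleType,
      (Equiv.Perm.isCycle_swap hab).cycleType,
      Equiv.Perm.card_support_swap hcd, Equiv.Perm.card_support_swap hab]
    rfl
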